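/- arXiv:1901.00017 — 4 statements merged into one kernel-verified Lean document; each statement's English description precedes it below -/
import Mathlib

section
/- Let φ : [1,∞) → ℝ be measurable with ‖φ‖_∞ ≤ M. For r ≥ 1 and t > 0 define (S₁(t)φ)(r) = (1/(r√(4πt))) ∫₁^∞ (e^{-(r-ρ)²/(4t)} − e^{-(r+ρ-2)²/(4t)}) ρ φ(ρ) dρ. Then |(S₁(t)φ)(r)| ≤ (1 − (2/(r√π)) ∫_{(r-1)/(2√t)}^∞ e^{-z²} dz) · M for every r ≥ 1 and t > 0; in particular |(S₁(t)φ)(r)| ≤ M. -/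
open Real MeasureTheory Set Filter

lemma my_integral_comp_add_right_Ioi (f : ℝ → ℝ) (a c : ℝ) :
    ∫ x in Set.Ioi a, f (x + c) = ∫ x in Set.Ioi (a + c), f x := by
  rw [← integral_indicator measurableSet_Ioi, ← integral_indicator measurableSet_Ioi,
    ← MeasureTheory.integral_add_right_eq_self ((Set.Ioi (a + c)).indicator f) c]
  congr 1
  ext x
  have h2 : (a + c < x + c) ↔ a < x := by constructor <;> intro <;> linarith
  by_cases h : a < x <;> simp [Set.indicator_apply, Set.mem_Ioi, h, h2]

lemma my_integral_comp_add_right_Iio (f : ℝ → ℝ) (a c : ℝ) :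
    ∫ x in Set.Iio a, f (x + c) = ∫ x in Set.Iio (a + c), f x := by
  rw [← integral_indicator measurableSet_Iio, ← integral_indicator measurableSet_Iio,
    ← MeasureTheory.integral_add_right_eq_self ((Set.Iio (a + c)).indicator f) c]
  congr 1
  ext x
  have h2 : (x + c < a + c) ↔ x < a := by constructor <;> intro <;> linarith
  by_cases h : x < a <;> simp [Set.indicator_apply, Set.mem_Iio, h, h2]

lemma gauss_int {t : ℝ} (ht : 0 < t) (c : ℝ) :
    Integrable (fun x : ℝ => Real.exp (-(x - c) ^ 2 / (4 * t))) := by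
  have hb : (0:ℝ) < 1 / (4 * t) := by positivity
  have h := (integrable_exp_neg_mul_sq hb).comp_sub_right c
  exact h.congr (ae_of_all _ fun x => by dsimp only; rw [show -(1/(4*t)) * (x - c)^2 = -(x-c)^2/(4*t) by ring])

lemma xgauss_int {t : ℝ} (ht : 0 < t) (c : ℝ) :
    Integrable (fun x : ℝ => (x - c) * Real.exp (-(x - c) ^ 2 / (4 * t))) := by
  have hb : (0:ℝ) < 1 / (4 * t) := by positivity
  have h := (integrable_mul_exp_neg_mul_sq hb).comp_sub_right c
  exact h.congr (ae_of_all _ fun x => by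
    dsimp only; rw [show -(1/(4*t)) * (x - c)^2 = -(x-c)^2/(4*t) by ring])

lemma idgauss_int {t : ℝ} (ht : 0 < t) (c : ℝ) :
    Integrable (fun x : ℝ => x * Real.exp (-(x - c) ^ 2 / (4 * t))) := by
  have h := (xgauss_int ht c).add ((gauss_int ht c).const_mul c)
  exact h.congr (ae_of_all _ fun x => by simp only [Pi.add_apply]; ring)

lemma gauss_ftc {t : ℝ} (ht : 0 < t) (a c : ℝ) :
    ∫ x in Set.Ioi a, (x - c) * Real.exp (-(x - c) ^ 2 / (4 * t))
      = 2 * t * Real.exp (-(a - c) ^ 2 / (4 * t)) := by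
  have key : ∀ x : ℝ, HasDerivAt (fun y => -(2 * t) * Real.exp (-(y - c) ^ 2 / (4 * t)))
      ((x - c) * Real.exp (-(x - c) ^ 2 / (4 * t))) x := by
    intro x
    have h1 : HasDerivAt (fun y : ℝ => -(y - c) ^ 2 / (4 * t))
        (-(2 * (x - c) ^ 1 * 1) / (4 * t)) x :=
      (((hasDerivAt_id x).sub_const c).pow 2).neg.div_const (4 * t)
    have h2 := (h1.exp).const_mul (-(2 * t))
    refine h2.congr_deriv ?_
    field_simp
    ring
  have htend : Tendsto (fun x : ℝ => -(2 * t) * Real.exp (-(x - c) ^ 2 / (4 * t)))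
      atTop (nhds 0) := by
    have h3 : Tendsto (fun x : ℝ => -(x - c) ^ 2 / (4 * t)) atTop atBot := by
      have h4 : Tendsto (fun x : ℝ => x - c) atTop atTop :=
        tendsto_atTop_add_const_right _ (-c) tendsto_id
      have h5 : Tendsto (fun x : ℝ => (x - c) ^ 2) atTop atTop :=
        (tendsto_pow_atTop two_ne_zero).comp h4
      have h6 : Tendsto (fun x : ℝ => (x - c) ^ 2 / (4 * t)) atTop atTop :=
        h5.atTop_div_const (by positivity)
      have := tendsto_neg_atTop_atBot.comp h6
      exact this.congr (fun x => by simp [neg_div])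
    have h7 := Real.tendsto_exp_atBot.comp h3
    have h8 := h7.const_mul (-(2 * t))
    simpa using h8
  have := integral_Ioi_of_hasDerivAt_of_tendsto' (a := a) (fun x _ => key x)
    ((xgauss_int ht c).integrableOn) htend
  rw [this]; ring

lemma gauss_total {t : ℝ} (ht : 0 < t) (c : ℝ) :
    ∫ x : ℝ, Real.exp (-(x - c) ^ 2 / (4 * t)) = Real.sqrt (4 * π * t) := by
  have hb : (0:ℝ) < 1 / (4 * t) := by positivity
  have h1 : ∫ x : ℝ, Real.exp (-(x - c) ^ 2 / (4 * t))
      = ∫ x : ℝ, Real.exp (-x ^ 2 / (4 * t)) := by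
    have := MeasureTheory.integral_sub_right_eq_self (μ := volume)
      (fun x : ℝ => Real.exp (-x ^ 2 / (4 * t))) c
    exact this
  rw [h1]
  have h2 : ∫ x : ℝ, Real.exp (-x ^ 2 / (4 * t))
      = ∫ x : ℝ, Real.exp (-(1/(4*t)) * x ^ 2) := by
    congr 1; ext x; rw [show -(1/(4*t)) * x^2 = -x^2/(4*t) by ring]
  rw [h2, integral_gaussian]
  congr 1
  field_simp

lemma my_integral_comp_add_right_Iic (f : ℝ → ℝ) (a c : ℝ) :
    ∫ x in Set.Iic a, f (x + c) = ∫ x in Set.Iic (a + c), f x := by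
  rw [← integral_indicator measurableSet_Iic, ← integral_indicator measurableSet_Iic,
    ← MeasureTheory.integral_add_right_eq_self ((Set.Iic (a + c)).indicator f) c]
  congr 1
  ext x
  have h2 : (x + c ≤ a + c) ↔ x ≤ a := by constructor <;> intro <;> linarith
  by_cases h : x ≤ a <;> simp [Set.indicator_apply, Set.mem_Iic, h, h2]

lemma gauss_halves {t : ℝ} (ht : 0 < t) (r : ℝ) :
    (∫ x in Set.Ioi (1:ℝ), Real.exp (-(x - r) ^ 2 / (4 * t)))
      + (∫ x in Set.Ioi (1:ℝ), Real.exp (-(x - (2 - r)) ^ 2 / (4 * t)))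
      = Real.sqrt (4 * π * t) := by
  set f : ℝ → ℝ := fun x => Real.exp (-(x - r) ^ 2 / (4 * t)) with hf
  have h2 : (∫ x in Set.Ioi (1:ℝ), Real.exp (-(x - (2 - r)) ^ 2 / (4 * t)))
      = ∫ x in Set.Iic (1:ℝ), f x := by
    have hrefl : (∫ x in Set.Ioi (1:ℝ), f (-x + 2))
        = ∫ x in Set.Iic (-1:ℝ), f (x + 2) :=
      integral_comp_neg_Ioi (c := (1:ℝ)) (f := fun y => f (y + 2))
    have hL : (∫ x in Set.Ioi (1:ℝ), Real.exp (-(x - (2 - r)) ^ 2 / (4 * t)))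
        = ∫ x in Set.Ioi (1:ℝ), f (-x + 2) := by
      apply setIntegral_congr_fun measurableSet_Ioi
      intro x _
      simp only [hf]
      congr 1
      ring
    rw [hL, hrefl, my_integral_comp_add_right_Iic f (-1) 2]
    norm_num
  rw [h2, add_comm]
  exact (intervalIntegral.integral_Iic_add_Ioi ((gauss_int ht r).integrableOn)
    ((gauss_int ht r).integrableOn)).trans (gauss_total ht r)

lemma gauss_tail {t : ℝ} (ht : 0 < t) (r : ℝ) :
    (∫ x in Set.Ioi (1:ℝ), Real.exp (-(x - (2 - r)) ^ 2 / (4 * t)))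
      = 2 * Real.sqrt t * ∫ z in Set.Ioi ((r - 1) / (2 * Real.sqrt t)), Real.exp (-z ^ 2) := by
  have hst : (0:ℝ) < Real.sqrt t := Real.sqrt_pos.mpr ht
  have h4 : Real.sqrt t ^ 2 = t := Real.sq_sqrt ht.le
  have h1 : (∫ x in Set.Ioi (1:ℝ), Real.exp (-(x - (2 - r)) ^ 2 / (4 * t)))
      = ∫ x in Set.Ioi (1:ℝ), (fun u => Real.exp (-u ^ 2 / (4 * t))) (x + (r - 2)) := by
    apply setIntegral_congr_fun measurableSet_Ioi
    intro x _
    dsimp only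
    congr 1
    ring
  rw [h1, my_integral_comp_add_right_Ioi (fun u => Real.exp (-u ^ 2 / (4 * t))) 1 (r - 2)]
  have hs : (0:ℝ) < (2 * Real.sqrt t)⁻¹ := by positivity
  have h3 : (∫ u in Set.Ioi (1 + (r - 2)), Real.exp (-u ^ 2 / (4 * t)))
      = ∫ u in Set.Ioi (1 + (r - 2)), Real.exp (-((2 * Real.sqrt t)⁻¹ * u) ^ 2) := by
    apply setIntegral_congr_fun measurableSet_Ioi
    intro u _
    have he : -u ^ 2 / (4 * t) = -((2 * Real.sqrt t)⁻¹ * u) ^ 2 := by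
      rw [mul_pow, inv_pow, mul_pow, h4]
      ring
    dsimp only
    rw [he]
  rw [h3, integral_comp_mul_left_Ioi (fun z => Real.exp (-z ^ 2)) _ hs]
  rw [smul_eq_mul, inv_inv]
  have h5 : (2 * Real.sqrt t)⁻¹ * (1 + (r - 2)) = (r - 1) / (2 * Real.sqrt t) := by
    field_simp
    ring
  rw [h5]
open Real MeasureTheory Set Filter

/-- The radially symmetric Dirichlet heat semigroup on ℝ³ \ B₁(0). -/
noncomputable def S1 (φ : ℝ → ℝ) (t r : ℝ) : ℝ :=
  (1 / (r * Real.sqrt (4 * π * t))) *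
    ∫ ρ in Set.Ioi (1:ℝ),
      (Real.exp (-(r - ρ) ^ 2 / (4 * t)) - Real.exp (-(r + ρ - 2) ^ 2 / (4 * t))) * (ρ * φ ρ)

theorem stmt_6 (φ : ℝ → ℝ) (hφm : Measurable φ) (M : ℝ)
    (hφ : ∀ ρ, 1 ≤ ρ → |φ ρ| ≤ M) :
    ∀ r t : ℝ, 1 ≤ r → 0 < t →
      |S1 φ t r| ≤
          (1 - (2 / (r * Real.sqrt π)) *
            ∫ z in Set.Ioi ((r - 1) / (2 * Real.sqrt t)), Real.exp (-z ^ 2)) * M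
        ∧ |S1 φ t r| ≤ M := by
  intro r t hr ht
  have hπ : (0:ℝ) < π := Real.pi_pos
  have hst : (0:ℝ) < Real.sqrt t := Real.sqrt_pos.mpr ht
  have hsπ : (0:ℝ) < Real.sqrt π := Real.sqrt_pos.mpr hπ
  have hr0 : (0:ℝ) < r := by linarith
  have hT : (0:ℝ) < Real.sqrt (4 * π * t) := Real.sqrt_pos.mpr (by positivity)
  set J := ∫ z in Set.Ioi ((r - 1) / (2 * Real.sqrt t)), Real.exp (-z ^ 2) with hJdef
  have hJ0 : 0 ≤ J := setIntegral_nonneg measurableSet_Ioi fun x _ => (Real.exp_pos _).le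
  have hM : 0 ≤ M := le_trans (abs_nonneg _) (hφ 1 le_rfl)
  -- integrability
  have hi1 : Integrable (fun ρ : ℝ => ρ * Real.exp (-(ρ - r) ^ 2 / (4 * t))) := idgauss_int ht r
  have hi2 : Integrable (fun ρ : ℝ => ρ * Real.exp (-(ρ - (2 - r)) ^ 2 / (4 * t))) :=
    idgauss_int ht (2 - r)
  set g : ℝ → ℝ := fun ρ =>
    (Real.exp (-(ρ - r) ^ 2 / (4 * t)) - Real.exp (-(ρ - (2 - r)) ^ 2 / (4 * t))) * ρ with hgdef
  have hgint : IntegrableOn g (Set.Ioi (1:ℝ)) := by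
    have := hi1.sub hi2
    exact (this.congr (ae_of_all _ fun ρ => by simp only [hgdef, Pi.sub_apply]; ring)).integrableOn
  set f : ℝ → ℝ := fun ρ =>
    (Real.exp (-(r - ρ) ^ 2 / (4 * t)) - Real.exp (-(r + ρ - 2) ^ 2 / (4 * t))) * (ρ * φ ρ)
    with hfdef
  have hfm : AEStronglyMeasurable f (volume.restrict (Set.Ioi (1:ℝ))) := by
    apply Measurable.aestronglyMeasurable
    fun_prop
  have hbound : ∀ ρ ∈ Set.Ioi (1:ℝ), ‖f ρ‖ ≤ g ρ * M := by
    intro ρ hρ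
    have hρ1 : (1:ℝ) < ρ := hρ
    have hρ0 : (0:ℝ) < ρ := by linarith
    have hsq1 : (r - ρ) ^ 2 = (ρ - r) ^ 2 := by ring
    have hsq2 : (r + ρ - 2) ^ 2 = (ρ - (2 - r)) ^ 2 := by ring
    have hdiff : Real.exp (-(ρ - (2 - r)) ^ 2 / (4 * t)) ≤ Real.exp (-(ρ - r) ^ 2 / (4 * t)) := by
      apply Real.exp_le_exp.2
      apply div_le_div_of_nonneg_right ?_ (by positivity)
      · nlinarith
    have hker : 0 ≤ Real.exp (-(ρ - r) ^ 2 / (4 * t)) - Real.exp (-(ρ - (2 - r)) ^ 2 / (4 * t)) :=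
      sub_nonneg.2 hdiff
    calc ‖f ρ‖ = (Real.exp (-(ρ - r) ^ 2 / (4 * t)) - Real.exp (-(ρ - (2 - r)) ^ 2 / (4 * t)))
          * (ρ * |φ ρ|) := by
          simp only [hfdef, Real.norm_eq_abs, hsq1, hsq2, abs_mul]
          rw [abs_of_nonneg hker, abs_of_pos hρ0]
      _ ≤ (Real.exp (-(ρ - r) ^ 2 / (4 * t)) - Real.exp (-(ρ - (2 - r)) ^ 2 / (4 * t)))
          * (ρ * M) := by
          gcongr
          exact hφ ρ hρ1.le
      _ = g ρ * M := by simp only [hgdef]; ring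
  have hfint : IntegrableOn f (Set.Ioi (1:ℝ)) := by
    apply Integrable.mono' (hgint.mul_const M) hfm
    exact (ae_restrict_iff' measurableSet_Ioi).2 (ae_of_all _ hbound)
  have habs : |∫ ρ in Set.Ioi (1:ℝ), f ρ| ≤ ∫ ρ in Set.Ioi (1:ℝ), g ρ * M := by
    calc |∫ ρ in Set.Ioi (1:ℝ), f ρ| ≤ ∫ ρ in Set.Ioi (1:ℝ), ‖f ρ‖ := by
          rw [← Real.norm_eq_abs]
          exact norm_integral_le_integral_norm f
      _ ≤ ∫ ρ in Set.Ioi (1:ℝ), g ρ * M :=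
          setIntegral_mono_on hfint.norm (hgint.mul_const M) measurableSet_Ioi hbound
  -- compute ∫ g
  have hval : ∫ ρ in Set.Ioi (1:ℝ), g ρ
      = r * Real.sqrt (4 * π * t) - 2 * (2 * Real.sqrt t * J) := by
    have hsplit : ∫ ρ in Set.Ioi (1:ℝ), g ρ
        = (∫ ρ in Set.Ioi (1:ℝ), ρ * Real.exp (-(ρ - r) ^ 2 / (4 * t)))
          - ∫ ρ in Set.Ioi (1:ℝ), ρ * Real.exp (-(ρ - (2 - r)) ^ 2 / (4 * t)) := by
      rw [← integral_sub hi1.integrableOn hi2.integrableOn]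
      apply setIntegral_congr_fun measurableSet_Ioi
      intro ρ _
      simp only [hgdef]
      ring
    have hI : ∀ c : ℝ, ∫ ρ in Set.Ioi (1:ℝ), ρ * Real.exp (-(ρ - c) ^ 2 / (4 * t))
        = 2 * t * Real.exp (-(1 - c) ^ 2 / (4 * t))
          + c * ∫ ρ in Set.Ioi (1:ℝ), Real.exp (-(ρ - c) ^ 2 / (4 * t)) := by
      intro c
      have h1 : ∫ ρ in Set.Ioi (1:ℝ), ρ * Real.exp (-(ρ - c) ^ 2 / (4 * t))
          = (∫ ρ in Set.Ioi (1:ℝ), (ρ - c) * Real.exp (-(ρ - c) ^ 2 / (4 * t)))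
            + ∫ ρ in Set.Ioi (1:ℝ), c * Real.exp (-(ρ - c) ^ 2 / (4 * t)) := by
        rw [← integral_add ((xgauss_int ht c).integrableOn)
          (((gauss_int ht c).const_mul c).integrableOn)]
        apply setIntegral_congr_fun measurableSet_Ioi
        intro ρ _
        ring
      rw [h1, gauss_ftc ht 1 c, MeasureTheory.integral_const_mul]
    rw [hsplit, hI r, hI (2 - r)]
    have he : Real.exp (-(1 - (2 - r)) ^ 2 / (4 * t)) = Real.exp (-(1 - r) ^ 2 / (4 * t)) := by
      congr 1
      ring
    rw [he]
    have hH := gauss_halves ht r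
    have hG := gauss_tail ht r
    rw [hG] at hH ⊢
    rw [← hJdef] at hH ⊢
    have hX : (∫ x in Set.Ioi (1:ℝ), Real.exp (-(x - r) ^ 2 / (4 * t)))
        = Real.sqrt (4 * π * t) - 2 * Real.sqrt t * J := by linarith
    rw [hX]
    ring
  have hgM : ∫ ρ in Set.Ioi (1:ℝ), g ρ * M
      = (r * Real.sqrt (4 * π * t) - 2 * (2 * Real.sqrt t * J)) * M := by
    rw [integral_mul_const, hval]
  have hS1 : |S1 φ t r| = (1 / (r * Real.sqrt (4 * π * t))) * |∫ ρ in Set.Ioi (1:ℝ), f ρ| := by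
    rw [S1, abs_mul, abs_of_pos (by positivity : (0:ℝ) < 1 / (r * Real.sqrt (4 * π * t)))]
  have hmain : |S1 φ t r| ≤ (1 - (2 / (r * Real.sqrt π)) * J) * M := by
    rw [hS1]
    have step : (1 / (r * Real.sqrt (4 * π * t))) * |∫ ρ in Set.Ioi (1:ℝ), f ρ|
        ≤ (1 / (r * Real.sqrt (4 * π * t)))
          * ((r * Real.sqrt (4 * π * t) - 2 * (2 * Real.sqrt t * J)) * M) := by
      rw [← hgM]
      exact mul_le_mul_of_nonneg_left (habs.trans_eq rfl) (by positivity)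
    refine step.trans_eq ?_
    have hT4 : Real.sqrt (4 * π * t) = 2 * Real.sqrt π * Real.sqrt t := by
      rw [show (4:ℝ) * π * t = (2 * Real.sqrt π * Real.sqrt t) ^ 2 by
        rw [mul_pow, mul_pow, Real.sq_sqrt hπ.le, Real.sq_sqrt ht.le]; ring]
      exact Real.sqrt_sq (by positivity)
    rw [hT4]
    field_simp
  refine ⟨hmain, hmain.trans ?_⟩
  have hc : 0 ≤ (2 / (r * Real.sqrt π)) * J := by positivity
  nlinarith [mul_nonneg hc hM]
end

section
/- Let φ : [1,∞) → ℝ be measurable with sup_{ρ≥1} |ρ φ(ρ)| ≤ K for some K > 0. For r ≥ 1, t > 0 define (S₁(t)φ)(r) = (1/(r√(4πt))) ∫₁^∞ (e^{-(r-ρ)²/(4t)} − e^{-(r+ρ-2)²/(4t)}) ρ φ(ρ) dρ. Then |(S₁(t)φ)(r)| ≤ ((r−1) K)/(r√(πt)) for every r > 1 and t > 0. -/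
open Real MeasureTheory

lemma gauss_integrable (t c : ℝ) (ht : 0 < t) :
    Integrable (fun ρ : ℝ => Real.exp (-(ρ - c) ^ 2 / (4 * t))) := by
  have h : Integrable (fun x : ℝ => Real.exp (-(1/(4*t)) * x ^ 2)) :=
    integrable_exp_neg_mul_sq (by positivity)
  have := h.comp_sub_right c
  convert this using 2 with ρ
  ring_nf

lemma key_bound (r t : ℝ) (hr : 1 < r) (ht : 0 < t) :
    ∫ ρ in Set.Ioi (1:ℝ),
      (Real.exp (-(r - ρ) ^ 2 / (4 * t)) - Real.exp (-(r + ρ - 2) ^ 2 / (4 * t)))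
      ≤ 2 * (r - 1) := by
  set g : ℝ → ℝ := fun ρ => Real.exp (-(ρ - r) ^ 2 / (4 * t)) with hg
  have hgi : Integrable g := gauss_integrable t r ht
  have h1 : ∀ ρ : ℝ, Real.exp (-(r - ρ) ^ 2 / (4 * t)) = g ρ := by
    intro ρ; simp only [hg]; ring_nf
  have h2 : ∀ ρ : ℝ, Real.exp (-(r + ρ - 2) ^ 2 / (4 * t)) = g (ρ + (2*r - 2)) := by
    intro ρ; simp only [hg]; ring_nf
  have hsub : (∫ ρ in Set.Ioi (1:ℝ), g (ρ + (2*r-2))) = ∫ ρ in Set.Ioi (2*r-1), g ρ := by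
    have hmp : MeasurePreserving (fun x : ℝ => x + (2*r-2)) volume volume :=
      measurePreserving_add_right volume (2*r-2)
    have hemb : MeasurableEmbedding (fun x : ℝ => x + (2*r-2)) :=
      (MeasurableEquiv.addRight (2*r-2)).measurableEmbedding
    have := hmp.setIntegral_preimage_emb hemb g (Set.Ioi (2*r-1))
    have hpre : (fun x : ℝ => x + (2*r-2)) ⁻¹' Set.Ioi (2*r-1) = Set.Ioi 1 := by
      ext x; simp only [Set.mem_preimage, Set.mem_Ioi]
      constructor <;> intro h <;> linarith
    rw [hpre] at this
    exact this
  simp only [h1, h2]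
  rw [integral_sub hgi.integrableOn ((hgi.comp_add_right (2*r-2)).integrableOn), hsub]
  have hsplit : Set.Ioi (1:ℝ) = Set.Ioc 1 (2*r-1) ∪ Set.Ioi (2*r-1) :=
    (Set.Ioc_union_Ioi_eq_Ioi (by linarith)).symm
  rw [hsplit, setIntegral_union (Set.Ioc_disjoint_Ioi le_rfl) measurableSet_Ioi
    hgi.integrableOn hgi.integrableOn]
  have hle : ∫ ρ in Set.Ioc (1:ℝ) (2*r-1), g ρ ≤ ∫ _ in Set.Ioc (1:ℝ) (2*r-1), (1:ℝ) := by
    apply setIntegral_mono_on hgi.integrableOn (integrableOn_const (by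
      rw [Real.volume_Ioc]; exact ENNReal.ofReal_ne_top)) measurableSet_Ioc
    intro x _
    exact Real.exp_le_one_iff.2 (div_nonpos_of_nonpos_of_nonneg (neg_nonpos.2 (sq_nonneg _)) (by positivity))
  have hconst : ∫ _ in Set.Ioc (1:ℝ) (2*r-1), (1:ℝ) = 2*r - 2 := by
    simp [Real.volume_Ioc]
    rw [max_eq_left (by linarith)]
    ring
  linarith

theorem stmt_7 (φ : ℝ → ℝ) (hφm : Measurable φ) (K : ℝ) (hK : 0 < K)
    (hφ : ∀ ρ, 1 ≤ ρ → |ρ * φ ρ| ≤ K) :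
    ∀ r t : ℝ, 1 < r → 0 < t →
      |S1 φ t r| ≤ (r - 1) * K / (r * Real.sqrt (π * t)) := by
  intro r t hr ht
  have hr0 : (0:ℝ) < r := by linarith
  have hA : Integrable (fun ρ : ℝ => Real.exp (-(r - ρ) ^ 2 / (4 * t))) := by
    have := gauss_integrable t r ht
    convert this using 2 with ρ
    ring_nf
  have hB : Integrable (fun ρ : ℝ => Real.exp (-(r + ρ - 2) ^ 2 / (4 * t))) := by
    have := gauss_integrable t (2 - r) ht
    convert this using 2 with ρ
    ring_nf
  have hgi : IntegrableOn
      (fun ρ : ℝ => (Real.exp (-(r - ρ) ^ 2 / (4 * t)) - Real.exp (-(r + ρ - 2) ^ 2 / (4 * t))) * K)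
      (Set.Ioi 1) := ((hA.sub hB).mul_const K).integrableOn
  have hAB : ∀ ρ : ℝ, 1 ≤ ρ →
      Real.exp (-(r + ρ - 2) ^ 2 / (4 * t)) ≤ Real.exp (-(r - ρ) ^ 2 / (4 * t)) := by
    intro ρ hρ
    apply Real.exp_le_exp.2
    have h4 : (0:ℝ) < 4 * t := by positivity
    rw [div_le_div_iff₀ h4 h4]
    nlinarith [mul_nonneg (mul_nonneg (by linarith : (0:ℝ) ≤ r - 1)
      (by linarith : (0:ℝ) ≤ ρ - 1)) h4.le]
  -- bound on the integral
  have hint : |∫ ρ in Set.Ioi (1:ℝ),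
      (Real.exp (-(r - ρ) ^ 2 / (4 * t)) - Real.exp (-(r + ρ - 2) ^ 2 / (4 * t))) * (ρ * φ ρ)|
      ≤ 2 * (r - 1) * K := by
    calc |∫ ρ in Set.Ioi (1:ℝ),
        (Real.exp (-(r - ρ) ^ 2 / (4 * t)) - Real.exp (-(r + ρ - 2) ^ 2 / (4 * t))) * (ρ * φ ρ)|
        ≤ ∫ ρ in Set.Ioi (1:ℝ),
          |(Real.exp (-(r - ρ) ^ 2 / (4 * t)) - Real.exp (-(r + ρ - 2) ^ 2 / (4 * t))) * (ρ * φ ρ)| := by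
          have := norm_integral_le_integral_norm (μ := volume.restrict (Set.Ioi 1))
            (f := fun ρ : ℝ =>
              (Real.exp (-(r - ρ) ^ 2 / (4 * t)) - Real.exp (-(r + ρ - 2) ^ 2 / (4 * t))) * (ρ * φ ρ))
          simp only [Real.norm_eq_abs] at this
          exact this
      _ ≤ ∫ ρ in Set.Ioi (1:ℝ),
          (Real.exp (-(r - ρ) ^ 2 / (4 * t)) - Real.exp (-(r + ρ - 2) ^ 2 / (4 * t))) * K := by
          apply integral_mono_of_nonneg (Filter.Eventually.of_forall fun ρ => abs_nonneg _) hgi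
          refine (ae_restrict_iff' measurableSet_Ioi).2 (Filter.Eventually.of_forall fun ρ hρ => ?_)
          have hρ1 : (1:ℝ) ≤ ρ := le_of_lt hρ
          dsimp only
          rw [abs_mul, abs_of_nonneg (sub_nonneg.2 (hAB ρ hρ1))]
          exact mul_le_mul_of_nonneg_left (hφ ρ hρ1) (sub_nonneg.2 (hAB ρ hρ1))
      _ = (∫ ρ in Set.Ioi (1:ℝ),
          (Real.exp (-(r - ρ) ^ 2 / (4 * t)) - Real.exp (-(r + ρ - 2) ^ 2 / (4 * t)))) * K :=
          integral_mul_const _ _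
      _ ≤ 2 * (r - 1) * K :=
          mul_le_mul_of_nonneg_right (key_bound r t hr ht) hK.le
  have hsqrt : Real.sqrt (4 * π * t) = 2 * Real.sqrt (π * t) := by
    rw [show (4:ℝ) * π * t = 2 ^ 2 * (π * t) by ring,
      Real.sqrt_mul (by positivity), Real.sqrt_sq (by norm_num)]
  have hs : 0 < Real.sqrt (π * t) := Real.sqrt_pos.2 (by positivity)
  unfold S1
  rw [abs_mul, abs_of_nonneg (by positivity : (0:ℝ) ≤ 1 / (r * Real.sqrt (4 * π * t))), hsqrt]
  calc 1 / (r * (2 * Real.sqrt (π * t))) * |∫ ρ in Set.Ioi (1:ℝ),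
        (Real.exp (-(r - ρ) ^ 2 / (4 * t)) - Real.exp (-(r + ρ - 2) ^ 2 / (4 * t))) * (ρ * φ ρ)|
      ≤ 1 / (r * (2 * Real.sqrt (π * t))) * (2 * (r - 1) * K) :=
        mul_le_mul_of_nonneg_left hint (by positivity)
    _ = (r - 1) * K / (r * Real.sqrt (π * t)) := by
        field_simp
end

section
/- Let φ : [1,∞) → ℝ with sup_{ρ≥1}|ρφ(ρ)| ≤ K, and let S₁(t)φ be as in the exterior-ball Dirichlet heat semigroup representation. Then the radial derivative satisfies |∂_r (S₁(t)φ)(r)| ≤ 2K/√(πt) for every r ≥ 1 and t > 0. -/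
open Real MeasureTheory Set Filter

namespace Stmt8Aux

/-- translation of a set integral over `Ioi`. -/
lemma shift_Ioi (h : ℝ → ℝ) (a c : ℝ) :
    ∫ ρ in Set.Ioi a, h (ρ - c) = ∫ u in Set.Ioi (a - c), h u := by
  rw [← integral_indicator measurableSet_Ioi, ← integral_indicator measurableSet_Ioi]
  have hind : ∀ ρ : ℝ, (Set.Ioi a).indicator (fun ρ => h (ρ - c)) ρ
      = (Set.Ioi (a - c)).indicator h (ρ - c) := by
    intro ρ
    simp only [Set.indicator_apply, Set.mem_Ioi, sub_lt_sub_iff_right]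
  simp_rw [hind]
  exact integral_sub_right_eq_self ((Set.Ioi (a - c)).indicator h) c

lemma int_exp {s : ℝ} (hs : 0 < s) : Integrable (fun u : ℝ => rexp (-u ^ 2 / s)) := by
  have h := integrable_exp_neg_mul_sq (b := 1 / s) (by positivity)
  have h2 : (fun u : ℝ => rexp (-(1 / s) * u ^ 2)) = fun u : ℝ => rexp (-u ^ 2 / s) := by
    funext u; congr 1; ring
  rwa [h2] at h

lemma int_abs_exp {s : ℝ} (hs : 0 < s) :
    Integrable (fun u : ℝ => |u| * rexp (-u ^ 2 / s)) := by
  have h := (integrable_mul_exp_neg_mul_sq (b := 1 / s) (by positivity)).abs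
  have h2 : (fun u : ℝ => |u * rexp (-(1 / s) * u ^ 2)|)
      = fun u : ℝ => |u| * rexp (-u ^ 2 / s) := by
    funext u
    rw [abs_mul, abs_of_pos (exp_pos _)]
    congr 2; ring
  rwa [h2] at h

lemma int_exp_shift {s : ℝ} (hs : 0 < s) (c : ℝ) :
    Integrable (fun ρ : ℝ => rexp (-(ρ - c) ^ 2 / s)) :=
  (int_exp hs).comp_sub_right c

lemma int_abs_exp_shift {s : ℝ} (hs : 0 < s) (c : ℝ) :
    Integrable (fun ρ : ℝ => |ρ - c| * rexp (-(ρ - c) ^ 2 / s)) :=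
  (int_abs_exp hs).comp_sub_right c

lemma tendsto_exp_aux {t : ℝ} (ht : 0 < t) :
    Tendsto (fun u : ℝ => -(2 * t * rexp (-u ^ 2 / (4 * t)))) atTop (nhds 0) := by
  have h1 : Tendsto (fun u : ℝ => -u ^ 2 / (4 * t)) atTop atBot := by
    apply Tendsto.atBot_div_const (by positivity : (0:ℝ) < 4 * t)
    exact tendsto_neg_atTop_atBot.comp (tendsto_pow_atTop (two_ne_zero))
  have h2 := Real.tendsto_exp_atBot.comp h1
  have h3 := (h2.const_mul (2 * t)).neg
  simpa using h3

lemma hasDerivAt_gauss {t : ℝ} (ht : 0 < t) (c x : ℝ) :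
    HasDerivAt (fun u : ℝ => -(2 * t * rexp (-(u - c) ^ 2 / (4 * t))))
      ((x - c) * rexp (-(x - c) ^ 2 / (4 * t))) x := by
  have h0 : HasDerivAt (fun u : ℝ => -(u - c) ^ 2 / (4 * t)) (-((x - c) / (2 * t))) x := by
    have h1 : HasDerivAt (fun u : ℝ => u - c) 1 x := (hasDerivAt_id x).sub_const c
    have h2 := (h1.pow 2).neg.div_const (4 * t)
    refine h2.congr_deriv ?_
    field_simp
    ring
  have h3 := (h0.exp.const_mul (2 * t)).neg
  refine h3.congr_deriv ?_
  field_simp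

lemma integrableOn_id_exp {t : ℝ} (ht : 0 < t) (s : Set ℝ) :
    IntegrableOn (fun u : ℝ => u * rexp (-u ^ 2 / (4 * t))) s := by
  apply Integrable.integrableOn
  have h := integrable_mul_exp_neg_mul_sq (b := 1 / (4 * t)) (by positivity)
  have h2 : (fun u : ℝ => u * rexp (-(1 / (4 * t)) * u ^ 2))
      = fun u : ℝ => u * rexp (-u ^ 2 / (4 * t)) := by
    funext u; congr 2; ring
  rwa [h2] at h

/-- FTC: `∫_{Ioi a} u e^{-u²/(4t)} du = 2t e^{-a²/(4t)}`. -/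
lemma integral_Ioi_id_exp {t : ℝ} (ht : 0 < t) (a : ℝ) :
    ∫ u in Set.Ioi a, u * rexp (-u ^ 2 / (4 * t)) = 2 * t * rexp (-a ^ 2 / (4 * t)) := by
  have := integral_Ioi_of_hasDerivAt_of_tendsto'
      (f := fun u : ℝ => -(2 * t * rexp (-(u - 0) ^ 2 / (4 * t))))
      (f' := fun u : ℝ => u * rexp (-u ^ 2 / (4 * t)))
      (a := a) ?_ (integrableOn_id_exp ht _) (by simpa using tendsto_exp_aux ht)
  · rw [this]; ring_nf
  · intro x _
    simpa using hasDerivAt_gauss ht 0 x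

/-- Bound: `∫_{Ioc a 0} |u| e^{-u²/(4t)} du ≤ 2t`. -/
lemma integral_Ioc_abs_exp {t : ℝ} (ht : 0 < t) {a : ℝ} (ha : a ≤ 0) :
    ∫ u in Set.Ioc a 0, |u| * rexp (-u ^ 2 / (4 * t)) ≤ 2 * t := by
  have heq : ∫ u in Set.Ioc a 0, |u| * rexp (-u ^ 2 / (4 * t))
      = ∫ u in Set.Ioc a 0, -(u * rexp (-u ^ 2 / (4 * t))) := by
    apply setIntegral_congr_fun measurableSet_Ioc
    intro u hu
    dsimp only
    rw [abs_of_nonpos hu.2]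
    ring
  rw [heq, ← intervalIntegral.integral_of_le ha]
  have hftc := intervalIntegral.integral_eq_sub_of_hasDerivAt
      (f := fun u : ℝ => 2 * t * rexp (-(u - 0) ^ 2 / (4 * t)))
      (f' := fun u : ℝ => -(u * rexp (-u ^ 2 / (4 * t))))
      (a := a) (b := 0) ?_ ?_
  · rw [hftc]
    have h1 : rexp (-((0:ℝ) - 0) ^ 2 / (4 * t)) = 1 := by norm_num
    rw [h1]
    nlinarith [exp_pos (-(a - (0:ℝ)) ^ 2 / (4 * t))]
  · intro x _
    have h := (hasDerivAt_gauss ht 0 x).neg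
    convert h using 1
    · funext u; simp only [Pi.neg_apply]; ring_nf
    · simp
  · apply Continuous.intervalIntegrable
    fun_prop

end Stmt8Aux

open Stmt8Aux

set_option maxHeartbeats 2000000 in
theorem stmt_8 (φ : ℝ → ℝ) (hφm : Measurable φ) (K : ℝ)
    (hφ : ∀ ρ, 1 ≤ ρ → |ρ * φ ρ| ≤ K) :
    ∀ r t : ℝ, 1 ≤ r → 0 < t →
      |deriv (fun r' => S1 φ t r') r| ≤ 2 * K / Real.sqrt (π * t) := by
  intro r t hr ht
  have hK : 0 ≤ K := le_trans (abs_nonneg _) (hφ 1 le_rfl)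
  have ht4 : (0:ℝ) < 4 * t := by positivity
  have ht8 : (0:ℝ) < 8 * t := by positivity
  have hr0 : (0:ℝ) < r := lt_of_lt_of_le one_pos hr
  set c : ℝ := Real.sqrt (4 * π * t) with hc_def
  have hc : 0 < c := Real.sqrt_pos.2 (by positivity)
  set F : ℝ → ℝ → ℝ := fun x ρ =>
    (rexp (-(x - ρ) ^ 2 / (4 * t)) - rexp (-(x + ρ - 2) ^ 2 / (4 * t))) * (ρ * φ ρ) with hF_def
  set F' : ℝ → ℝ → ℝ := fun x ρ =>
    (-((x - ρ) / (2 * t)) * rexp (-(x - ρ) ^ 2 / (4 * t))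
      + (x + ρ - 2) / (2 * t) * rexp (-(x + ρ - 2) ^ 2 / (4 * t))) * (ρ * φ ρ) with hF'_def
  set μ : Measure ℝ := volume.restrict (Set.Ioi 1) with hμ_def
  -- measurability
  have hmeasF : ∀ x : ℝ, AEStronglyMeasurable (F x) μ := by
    intro x
    apply Measurable.aestronglyMeasurable
    rw [hF_def]
    fun_prop
  have hmeasF' : AEStronglyMeasurable (F' r) μ := by
    apply Measurable.aestronglyMeasurable
    rw [hF'_def]
    fun_prop
  -- integrability of F r
  have hF_int : Integrable (F r) μ := by
    apply Integrable.mono'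
      (g := fun ρ => (rexp (-(ρ - r) ^ 2 / (4 * t)) + rexp (-(ρ - (2 - r)) ^ 2 / (4 * t))) * K)
      (((int_exp_shift ht4 r).add (int_exp_shift ht4 (2 - r))).mul_const K |>.restrict)
      (hmeasF r)
    rw [ae_restrict_iff' measurableSet_Ioi]
    filter_upwards with ρ hρ
    rw [hF_def]
    dsimp only
    rw [Real.norm_eq_abs, abs_mul]
    have e1 : (r - ρ) ^ 2 = (ρ - r) ^ 2 := by ring
    have e2 : (r + ρ - 2) ^ 2 = (ρ - (2 - r)) ^ 2 := by ring
    rw [e1, e2]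
    apply mul_le_mul _ (hφ ρ (le_of_lt hρ)) (abs_nonneg _)
      (by positivity)
    rw [abs_le]
    constructor
    · nlinarith [exp_pos (-(ρ - r) ^ 2 / (4 * t)), exp_pos (-(ρ - (2 - r)) ^ 2 / (4 * t))]
    · nlinarith [exp_pos (-(ρ - r) ^ 2 / (4 * t)), exp_pos (-(ρ - (2 - r)) ^ 2 / (4 * t))]
  -- the dominating function for the derivative
  set B : ℝ → ℝ := fun ρ => (K / (2 * t) * rexp (1 / (4 * t))) *
      ((|ρ - r| * rexp (-(ρ - r) ^ 2 / (8 * t)) + rexp (-(ρ - r) ^ 2 / (8 * t)))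
        + (|ρ - (2 - r)| * rexp (-(ρ - (2 - r)) ^ 2 / (8 * t))
            + rexp (-(ρ - (2 - r)) ^ 2 / (8 * t)))) with hB_def
  have hB_int : Integrable B μ := by
    rw [hB_def]
    exact ((((int_abs_exp_shift ht8 r).add (int_exp_shift ht8 r)).add
      ((int_abs_exp_shift ht8 (2 - r)).add (int_exp_shift ht8 (2 - r)))).const_mul
      (K / (2 * t) * rexp (1 / (4 * t)))).restrict
  -- the key pointwise estimate
  have key_est : ∀ a b : ℝ, |a + b| ≤ 1 →
      |a| * rexp (-a ^ 2 / (4 * t)) ≤ rexp (1 / (4 * t)) * ((|b| + 1) * rexp (-b ^ 2 / (8 * t))) := by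
    intro a b hab
    have h1 : |a| ≤ |b| + 1 := by
      have h := abs_add_le (a + b) (-b)
      simp only [add_neg_cancel_right, abs_neg] at h
      linarith
    have hsq : b ^ 2 / 2 - 1 ≤ a ^ 2 := by
      nlinarith [sq_nonneg (2 * a + b), sq_abs (a + b), abs_nonneg (a + b)]
    have h2 : rexp (-a ^ 2 / (4 * t)) ≤ rexp (1 / (4 * t)) * rexp (-b ^ 2 / (8 * t)) := by
      rw [← Real.exp_add]
      apply Real.exp_le_exp.2
      rw [show 1 / (4 * t) + -b ^ 2 / (8 * t) = (1 - b ^ 2 / 2) / (4 * t) by field_simp; ring]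
      apply (div_le_div_iff_of_pos_right ht4).2
      linarith
    calc |a| * rexp (-a ^ 2 / (4 * t))
        ≤ (|b| + 1) * (rexp (1 / (4 * t)) * rexp (-b ^ 2 / (8 * t))) := by
          apply mul_le_mul h1 h2 (exp_pos _).le (by positivity)
      _ = rexp (1 / (4 * t)) * ((|b| + 1) * rexp (-b ^ 2 / (8 * t))) := by ring
  -- a.e. bound for F' on the ball of radius 1
  have h_bound : ∀ᵐ ρ ∂μ, ∀ x ∈ Metric.ball r 1, ‖F' x ρ‖ ≤ B ρ := by
    rw [hμ_def, ae_restrict_iff' measurableSet_Ioi]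
    filter_upwards with ρ hρ x hx
    rw [Metric.mem_ball, Real.dist_eq] at hx
    have hxr : |x - r| ≤ 1 := le_of_lt hx
    have hu : |(-((x - ρ) / (2 * t)) * rexp (-(x - ρ) ^ 2 / (4 * t)))|
        ≤ 1 / (2 * t) * (rexp (1 / (4 * t)) * ((|ρ - r| + 1) * rexp (-(ρ - r) ^ 2 / (8 * t)))) := by
      rw [abs_mul, abs_neg, abs_div, abs_of_pos (show (0:ℝ) < 2 * t by positivity),
        abs_of_pos (exp_pos _)]
      have h := key_est (x - ρ) (ρ - r) (by rw [show (x - ρ) + (ρ - r) = x - r by ring]; exact hxr)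
      calc |x - ρ| / (2 * t) * rexp (-(x - ρ) ^ 2 / (4 * t))
          = (|x - ρ| * rexp (-(x - ρ) ^ 2 / (4 * t))) / (2 * t) := by ring
        _ ≤ (rexp (1 / (4 * t)) * ((|ρ - r| + 1) * rexp (-(ρ - r) ^ 2 / (8 * t)))) / (2 * t) :=
            (div_le_div_iff_of_pos_right (by positivity)).2 h
        _ = 1 / (2 * t) * (rexp (1 / (4 * t)) * ((|ρ - r| + 1) * rexp (-(ρ - r) ^ 2 / (8 * t)))) := by
            ring
    have hv : |((x + ρ - 2) / (2 * t) * rexp (-(x + ρ - 2) ^ 2 / (4 * t)))|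
        ≤ 1 / (2 * t) * (rexp (1 / (4 * t)) * ((|ρ - (2 - r)| + 1)
            * rexp (-(ρ - (2 - r)) ^ 2 / (8 * t)))) := by
      rw [abs_mul, abs_div, abs_of_pos (show (0:ℝ) < 2 * t by positivity),
        abs_of_pos (exp_pos _)]
      have h := key_est (x + ρ - 2) ((2 - r) - ρ)
        (by rw [show (x + ρ - 2) + ((2 - r) - ρ) = x - r by ring]; exact hxr)
      rw [abs_sub_comm (2 - r) ρ, show ((2 - r) - ρ) ^ 2 = (ρ - (2 - r)) ^ 2 by ring] at h
      calc |x + ρ - 2| / (2 * t) * rexp (-(x + ρ - 2) ^ 2 / (4 * t))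
          = (|x + ρ - 2| * rexp (-(x + ρ - 2) ^ 2 / (4 * t))) / (2 * t) := by ring
        _ ≤ (rexp (1 / (4 * t)) * ((|ρ - (2 - r)| + 1)
              * rexp (-(ρ - (2 - r)) ^ 2 / (8 * t)))) / (2 * t) :=
            (div_le_div_iff_of_pos_right (by positivity)).2 h
        _ = 1 / (2 * t) * (rexp (1 / (4 * t)) * ((|ρ - (2 - r)| + 1)
              * rexp (-(ρ - (2 - r)) ^ 2 / (8 * t)))) := by ring
    rw [hF'_def]
    dsimp only
    rw [Real.norm_eq_abs, abs_mul]
    have habs : |(-((x - ρ) / (2 * t)) * rexp (-(x - ρ) ^ 2 / (4 * t))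
        + (x + ρ - 2) / (2 * t) * rexp (-(x + ρ - 2) ^ 2 / (4 * t)))|
        ≤ 1 / (2 * t) * (rexp (1 / (4 * t)) * ((|ρ - r| + 1) * rexp (-(ρ - r) ^ 2 / (8 * t))))
          + 1 / (2 * t) * (rexp (1 / (4 * t)) * ((|ρ - (2 - r)| + 1)
            * rexp (-(ρ - (2 - r)) ^ 2 / (8 * t)))) :=
      le_trans (abs_add_le _ _) (add_le_add hu hv)
    calc |(-((x - ρ) / (2 * t)) * rexp (-(x - ρ) ^ 2 / (4 * t))
          + (x + ρ - 2) / (2 * t) * rexp (-(x + ρ - 2) ^ 2 / (4 * t)))| * |ρ * φ ρ|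
        ≤ (1 / (2 * t) * (rexp (1 / (4 * t)) * ((|ρ - r| + 1) * rexp (-(ρ - r) ^ 2 / (8 * t))))
            + 1 / (2 * t) * (rexp (1 / (4 * t)) * ((|ρ - (2 - r)| + 1)
              * rexp (-(ρ - (2 - r)) ^ 2 / (8 * t))))) * K := by
          apply mul_le_mul habs (hφ ρ (le_of_lt hρ)) (abs_nonneg _) (by positivity)
      _ = B ρ := by rw [hB_def]; dsimp only; ring
  -- differentiability of the integrand in x
  have h_diff : ∀ᵐ ρ ∂μ, ∀ x ∈ Metric.ball r 1, HasDerivAt (fun x => F x ρ) (F' x ρ) x := by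
    filter_upwards with ρ x _
    rw [hF_def, hF'_def]
    dsimp only
    have hA : HasDerivAt (fun x : ℝ => rexp (-(x - ρ) ^ 2 / (4 * t)))
        (rexp (-(x - ρ) ^ 2 / (4 * t)) * (-(2 * (x - ρ) ^ 1 * 1) / (4 * t))) x := by
      exact (((hasDerivAt_id x).sub_const ρ).pow 2).neg.div_const (4 * t) |>.exp
    have hB' : HasDerivAt (fun x : ℝ => rexp (-(x + ρ - 2) ^ 2 / (4 * t)))
        (rexp (-(x + ρ - 2) ^ 2 / (4 * t)) * (-(2 * (x + ρ - 2) ^ 1 * 1) / (4 * t))) x := by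
      exact ((((hasDerivAt_id x).add_const ρ).sub_const 2).pow 2).neg.div_const (4 * t) |>.exp
    have h := (hA.sub hB').mul_const (ρ * φ ρ)
    refine h.congr_deriv ?_
    field_simp
    ring
  -- differentiate under the integral sign
  obtain ⟨hF'_int, hFi⟩ := hasDerivAt_integral_of_dominated_loc_of_deriv_le
    (μ := μ) (x₀ := r) (s := Metric.ball r 1) (F := F) (F' := F') (Metric.ball_mem_nhds r one_pos)
    (Eventually.of_forall hmeasF) hF_int hmeasF' h_bound hB_int h_diff
  -- Bound on |∫ F r|
  have hsub : (1:ℝ) - r ≤ r - 1 := by linarith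
  have hFr_bound : |∫ ρ, F r ρ ∂μ| ≤ K * (2 * (r - 1)) := by
    have step1 : |∫ ρ, F r ρ ∂μ| ≤ ∫ ρ, ‖F r ρ‖ ∂μ := by
      rw [← Real.norm_eq_abs]; exact norm_integral_le_integral_norm _
    have step2 : ∫ ρ, ‖F r ρ‖ ∂μ ≤ ∫ ρ in Set.Ioi 1,
        K * (rexp (-(ρ - r) ^ 2 / (4 * t)) - rexp (-(ρ - (2 - r)) ^ 2 / (4 * t))) := by
      rw [hμ_def]
      apply setIntegral_mono_on hF_int.norm
        ((((int_exp_shift ht4 r).sub (int_exp_shift ht4 (2 - r))).const_mul K).integrableOn)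
        measurableSet_Ioi
      intro ρ hρ
      rw [hF_def]
      dsimp only
      rw [Real.norm_eq_abs, abs_mul]
      have e1 : (r - ρ) ^ 2 = (ρ - r) ^ 2 := by ring
      have e2 : (r + ρ - 2) ^ 2 = (ρ - (2 - r)) ^ 2 := by ring
      rw [e1, e2]
      rw [Set.mem_Ioi] at hρ
      have hmono : rexp (-(ρ - (2 - r)) ^ 2 / (4 * t)) ≤ rexp (-(ρ - r) ^ 2 / (4 * t)) := by
        apply Real.exp_le_exp.2
        apply div_le_div_of_nonneg_right ?_ ht4.le
        nlinarith [mul_nonneg (sub_nonneg.2 hr) (sub_nonneg.2 hρ.le)]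
      rw [abs_of_nonneg (sub_nonneg.2 hmono)]
      calc (rexp (-(ρ - r) ^ 2 / (4 * t)) - rexp (-(ρ - (2 - r)) ^ 2 / (4 * t))) * |ρ * φ ρ|
          ≤ (rexp (-(ρ - r) ^ 2 / (4 * t)) - rexp (-(ρ - (2 - r)) ^ 2 / (4 * t))) * K := by
            apply mul_le_mul_of_nonneg_left (hφ ρ hρ.le) (sub_nonneg.2 hmono)
        _ = K * (rexp (-(ρ - r) ^ 2 / (4 * t)) - rexp (-(ρ - (2 - r)) ^ 2 / (4 * t))) := by ring
    have step3 : ∫ ρ in Set.Ioi 1,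
        K * (rexp (-(ρ - r) ^ 2 / (4 * t)) - rexp (-(ρ - (2 - r)) ^ 2 / (4 * t)))
        ≤ K * (2 * (r - 1)) := by
      rw [integral_const_mul]
      apply mul_le_mul_of_nonneg_left ?_ hK
      rw [integral_sub ((int_exp_shift ht4 r).integrableOn)
        ((int_exp_shift ht4 (2 - r)).integrableOn)]
      have t1 : ∫ ρ in Set.Ioi (1:ℝ), rexp (-(ρ - r) ^ 2 / (4 * t))
          = ∫ u in Set.Ioi (1 - r), rexp (-u ^ 2 / (4 * t)) :=
        shift_Ioi (fun u => rexp (-u ^ 2 / (4 * t))) 1 r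
      have t2 : ∫ ρ in Set.Ioi (1:ℝ), rexp (-(ρ - (2 - r)) ^ 2 / (4 * t))
          = ∫ u in Set.Ioi (r - 1), rexp (-u ^ 2 / (4 * t)) := by
        have := shift_Ioi (fun u => rexp (-u ^ 2 / (4 * t))) 1 (2 - r)
        rw [show (1:ℝ) - (2 - r) = r - 1 by ring] at this
        exact this
      rw [t1, t2]
      rw [← Ioc_union_Ioi_eq_Ioi hsub,
        setIntegral_union (Ioc_disjoint_Ioi le_rfl) measurableSet_Ioi
          ((int_exp ht4).integrableOn) ((int_exp ht4).integrableOn)]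
      have hIoc : ∫ u in Set.Ioc (1 - r) (r - 1), rexp (-u ^ 2 / (4 * t)) ≤ 2 * (r - 1) := by
        have hle : ∫ u in Set.Ioc (1 - r) (r - 1), rexp (-u ^ 2 / (4 * t))
            ≤ ∫ _u in Set.Ioc (1 - r) (r - 1), (1:ℝ) := by
          apply setIntegral_mono_on ((int_exp ht4).integrableOn)
            (integrableOn_const measure_Ioc_lt_top.ne) measurableSet_Ioc
          intro u _
          apply Real.exp_le_one_iff.2
          rw [neg_div]
          exact neg_nonpos.2 (by positivity)
        have hconst : ∫ _u in Set.Ioc (1 - r) (r - 1), (1:ℝ) = 2 * (r - 1) := by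
          rw [setIntegral_const, measureReal_def, Real.volume_Ioc, smul_eq_mul, mul_one,
            ENNReal.toReal_ofReal (by linarith)]
          ring
        linarith
      linarith
    linarith
  -- Bound on |∫ F' r|
  have hF'r_bound : |∫ ρ, F' r ρ ∂μ| ≤ 3 * K := by
    have step1 : |∫ ρ, F' r ρ ∂μ| ≤ ∫ ρ, ‖F' r ρ‖ ∂μ := by
      rw [← Real.norm_eq_abs]; exact norm_integral_le_integral_norm _
    have step2 : ∫ ρ, ‖F' r ρ‖ ∂μ ≤ ∫ ρ in Set.Ioi 1,
        K * (1 / (2 * t) * (|ρ - r| * rexp (-(ρ - r) ^ 2 / (4 * t)))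
          + 1 / (2 * t) * (|ρ - (2 - r)| * rexp (-(ρ - (2 - r)) ^ 2 / (4 * t)))) := by
      rw [hμ_def]
      apply setIntegral_mono_on hF'_int.norm
        (((((int_abs_exp_shift ht4 r).const_mul (1 / (2 * t))).add
          ((int_abs_exp_shift ht4 (2 - r)).const_mul (1 / (2 * t)))).const_mul K).integrableOn)
        measurableSet_Ioi
      intro ρ hρ
      rw [Set.mem_Ioi] at hρ
      rw [hF'_def]
      dsimp only
      rw [Real.norm_eq_abs, abs_mul]
      have hu : |(-((r - ρ) / (2 * t)) * rexp (-(r - ρ) ^ 2 / (4 * t)))|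
          = 1 / (2 * t) * (|ρ - r| * rexp (-(ρ - r) ^ 2 / (4 * t))) := by
        rw [abs_mul, abs_neg, abs_div, abs_of_pos (show (0:ℝ) < 2 * t by positivity),
          abs_of_pos (exp_pos _), abs_sub_comm r ρ, show (r - ρ) ^ 2 = (ρ - r) ^ 2 by ring]
        ring
      have hv : |((r + ρ - 2) / (2 * t) * rexp (-(r + ρ - 2) ^ 2 / (4 * t)))|
          = 1 / (2 * t) * (|ρ - (2 - r)| * rexp (-(ρ - (2 - r)) ^ 2 / (4 * t))) := by
        rw [abs_mul, abs_div, abs_of_pos (show (0:ℝ) < 2 * t by positivity),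
          abs_of_pos (exp_pos _), show r + ρ - 2 = ρ - (2 - r) by ring]
        ring
      have habs : |(-((r - ρ) / (2 * t)) * rexp (-(r - ρ) ^ 2 / (4 * t))
          + (r + ρ - 2) / (2 * t) * rexp (-(r + ρ - 2) ^ 2 / (4 * t)))|
          ≤ 1 / (2 * t) * (|ρ - r| * rexp (-(ρ - r) ^ 2 / (4 * t)))
            + 1 / (2 * t) * (|ρ - (2 - r)| * rexp (-(ρ - (2 - r)) ^ 2 / (4 * t))) := by
        refine le_trans (abs_add_le _ _) ?_
        rw [hu, hv]
      calc |(-((r - ρ) / (2 * t)) * rexp (-(r - ρ) ^ 2 / (4 * t))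
            + (r + ρ - 2) / (2 * t) * rexp (-(r + ρ - 2) ^ 2 / (4 * t)))| * |ρ * φ ρ|
          ≤ (1 / (2 * t) * (|ρ - r| * rexp (-(ρ - r) ^ 2 / (4 * t)))
              + 1 / (2 * t) * (|ρ - (2 - r)| * rexp (-(ρ - (2 - r)) ^ 2 / (4 * t)))) * K := by
            apply mul_le_mul habs (hφ ρ hρ.le) (abs_nonneg _) (by positivity)
        _ = K * (1 / (2 * t) * (|ρ - r| * rexp (-(ρ - r) ^ 2 / (4 * t)))
              + 1 / (2 * t) * (|ρ - (2 - r)| * rexp (-(ρ - (2 - r)) ^ 2 / (4 * t)))) := by ring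
    have hI1 : ∫ ρ in Set.Ioi (1:ℝ), |ρ - r| * rexp (-(ρ - r) ^ 2 / (4 * t)) ≤ 4 * t := by
      have t1 : ∫ ρ in Set.Ioi (1:ℝ), |ρ - r| * rexp (-(ρ - r) ^ 2 / (4 * t))
          = ∫ u in Set.Ioi (1 - r), |u| * rexp (-u ^ 2 / (4 * t)) :=
        shift_Ioi (fun u => |u| * rexp (-u ^ 2 / (4 * t))) 1 r
      rw [t1, ← Ioc_union_Ioi_eq_Ioi (show (1:ℝ) - r ≤ 0 by linarith),
        setIntegral_union (Ioc_disjoint_Ioi le_rfl) measurableSet_Ioi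
          ((int_abs_exp ht4).integrableOn) ((int_abs_exp ht4).integrableOn)]
      have h2 : ∫ u in Set.Ioi (0:ℝ), |u| * rexp (-u ^ 2 / (4 * t)) = 2 * t := by
        have hcongr : ∫ u in Set.Ioi (0:ℝ), |u| * rexp (-u ^ 2 / (4 * t))
            = ∫ u in Set.Ioi (0:ℝ), u * rexp (-u ^ 2 / (4 * t)) := by
          apply setIntegral_congr_fun measurableSet_Ioi
          intro u hu
          dsimp only
          rw [abs_of_pos hu]
        rw [hcongr, integral_Ioi_id_exp ht 0]
        norm_num
      have h1 := integral_Ioc_abs_exp ht (show (1:ℝ) - r ≤ 0 by linarith)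
      linarith
    have hI2 : ∫ ρ in Set.Ioi (1:ℝ), |ρ - (2 - r)| * rexp (-(ρ - (2 - r)) ^ 2 / (4 * t))
        ≤ 2 * t := by
      have t2 : ∫ ρ in Set.Ioi (1:ℝ), |ρ - (2 - r)| * rexp (-(ρ - (2 - r)) ^ 2 / (4 * t))
          = ∫ u in Set.Ioi (r - 1), |u| * rexp (-u ^ 2 / (4 * t)) := by
        have := shift_Ioi (fun u => |u| * rexp (-u ^ 2 / (4 * t))) 1 (2 - r)
        rw [show (1:ℝ) - (2 - r) = r - 1 by ring] at this
        exact this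
      have hcongr : ∫ u in Set.Ioi (r - 1), |u| * rexp (-u ^ 2 / (4 * t))
          = ∫ u in Set.Ioi (r - 1), u * rexp (-u ^ 2 / (4 * t)) := by
        apply setIntegral_congr_fun measurableSet_Ioi
        intro u hu
        dsimp only
        rw [Set.mem_Ioi] at hu
        rw [abs_of_pos (by linarith)]
      rw [t2, hcongr, integral_Ioi_id_exp ht (r - 1)]
      nlinarith [Real.exp_le_one_iff.2 (show -(r - 1) ^ 2 / (4 * t) ≤ 0 by
        rw [neg_div]; exact neg_nonpos.2 (by positivity)), Real.exp_pos (-(r - 1) ^ 2 / (4 * t))]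
    have step3 : ∫ ρ in Set.Ioi 1,
        K * (1 / (2 * t) * (|ρ - r| * rexp (-(ρ - r) ^ 2 / (4 * t)))
          + 1 / (2 * t) * (|ρ - (2 - r)| * rexp (-(ρ - (2 - r)) ^ 2 / (4 * t)))) ≤ 3 * K := by
      rw [integral_const_mul, integral_add
        (((int_abs_exp_shift ht4 r).const_mul (1 / (2 * t))).integrableOn)
        (((int_abs_exp_shift ht4 (2 - r)).const_mul (1 / (2 * t))).integrableOn),
        integral_const_mul, integral_const_mul]
      have h2t : (0:ℝ) < 1 / (2 * t) := by positivity
      calc K * ((1 / (2 * t) * ∫ ρ in Set.Ioi (1:ℝ), |ρ - r| * rexp (-(ρ - r) ^ 2 / (4 * t)))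
            + 1 / (2 * t) * ∫ ρ in Set.Ioi (1:ℝ),
                |ρ - (2 - r)| * rexp (-(ρ - (2 - r)) ^ 2 / (4 * t)))
          ≤ K * (1 / (2 * t) * (4 * t) + 1 / (2 * t) * (2 * t)) := by
            apply mul_le_mul_of_nonneg_left ?_ hK
            apply add_le_add (mul_le_mul_of_nonneg_left hI1 h2t.le)
              (mul_le_mul_of_nonneg_left hI2 h2t.le)
        _ = 3 * K := by field_simp; ring
    linarith
  -- derivative of the full function
  have h1 : HasDerivAt (fun x : ℝ => 1 / (x * c)) (-(1 * c) / (r * c) ^ 2) r := by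
    have h := ((hasDerivAt_id r).mul_const c).inv (ne_of_gt (mul_pos hr0 hc))
    simpa [one_div, Pi.inv_def] using h
  have hprod := h1.mul hFi
  have hfun : (fun r' => S1 φ t r') = (fun x => (1 / (x * c)) * ∫ ρ, F x ρ ∂μ) := by
    funext x
    simp only [S1, hμ_def, hc_def, hF_def]
  have hderiv_eq : deriv (fun r' => S1 φ t r') r
      = -(1 * c) / (r * c) ^ 2 * (∫ ρ, F r ρ ∂μ) + (1 / (r * c)) * ∫ ρ, F' r ρ ∂μ := by
    rw [hfun]
    exact hprod.deriv
  rw [hderiv_eq]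
  -- final arithmetic
  have habs1 : |(-(1 * c) / (r * c) ^ 2)| = c / (r * c) ^ 2 := by
    rw [abs_div, abs_neg, abs_of_pos (show (0:ℝ) < 1 * c by linarith),
      abs_of_pos (show (0:ℝ) < (r * c) ^ 2 by positivity)]
    ring_nf
  have habs2 : |(1 / (r * c))| = 1 / (r * c) := by
    rw [abs_of_pos (by positivity)]
  have hc2 : c = 2 * Real.sqrt (π * t) := by
    rw [hc_def, show (4:ℝ) * π * t = 2 ^ 2 * (π * t) by ring,
      Real.sqrt_mul (by norm_num : (0:ℝ) ≤ 2 ^ 2), Real.sqrt_sq (by norm_num : (0:ℝ) ≤ 2)]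
  have hs : 0 < Real.sqrt (π * t) := Real.sqrt_pos.2 (by positivity)
  calc |(-(1 * c) / (r * c) ^ 2 * (∫ ρ, F r ρ ∂μ) + (1 / (r * c)) * ∫ ρ, F' r ρ ∂μ)|
      ≤ |(-(1 * c) / (r * c) ^ 2)| * |∫ ρ, F r ρ ∂μ| + |(1 / (r * c))| * |∫ ρ, F' r ρ ∂μ| := by
        refine le_trans (abs_add_le _ _) ?_
        rw [abs_mul, abs_mul]
    _ ≤ c / (r * c) ^ 2 * (K * (2 * (r - 1))) + 1 / (r * c) * (3 * K) := by
        rw [habs1, habs2]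
        apply add_le_add
        · exact mul_le_mul_of_nonneg_left hFr_bound (by positivity)
        · exact mul_le_mul_of_nonneg_left hF'r_bound (by positivity)
    _ ≤ 2 * K / Real.sqrt (π * t) := by
        rw [hc2]
        set s : ℝ := Real.sqrt (π * t) with hs_def
        have key : 2 * s / (r * (2 * s)) ^ 2 * (K * (2 * (r - 1))) + 1 / (r * (2 * s)) * (3 * K)
            = (K * (2 * (r - 1)) + 3 * K * r) / (2 * r ^ 2 * s) := by
          field_simp
        rw [key, div_le_div_iff₀ (by positivity) hs]
        nlinarith [mul_nonneg (mul_nonneg hs.le hK) (sq_nonneg (r - 1)),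
          mul_nonneg (mul_nonneg hs.le hK) (sub_nonneg.2 hr), mul_nonneg hs.le hK]
end

section
/- Let T > 0 and let g : (0,T) → ℝ be continuous with M := sup_{τ∈(0,T)} |√τ g(τ)| < ∞. For r ≥ 1, t ∈ (0,T), ε > 0 define D̃_ε(r,t) = (2/(r√π)) ∫₀ᵗ g(s) ∫₀^{(r−1)√ε/(2√(t−s))} e^{-z²} dz ds − (2/(r√π)) ∫₀ᵗ (∫₀ˢ e^{σ−s} g(σ) dσ) ∫₀^{(r−1)√ε/(2√(t−s))} e^{-z²} dz ds. Then |D̃_ε(r,t)| ≤ √(επ)(1+t) M for all r ≥ 1 and t ∈ (0,T). -/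
open Real MeasureTheory

lemma sin_lt_sin_of (a b : ℝ) (ha : 0 ≤ a) (hb : b ≤ π/2) (hab : a < b) :
    Real.sin a < Real.sin b := by
  refine Real.strictMonoOn_sin (Set.mem_Icc.mpr ⟨?_, ?_⟩) (Set.mem_Icc.mpr ⟨?_, ?_⟩) hab <;>
    linarith [Real.pi_pos]

lemma phi_img (t : ℝ) (ht : 0 < t) :
    (fun θ : ℝ => t * Real.sin θ ^ 2) '' Set.Ioo 0 (π/2) = Set.Ioo 0 t := by
  ext y
  constructor
  · rintro ⟨θ, hθ, rfl⟩
    have h1 : 0 < Real.sin θ := Real.sin_pos_of_pos_of_lt_pi hθ.1 (by linarith [Real.pi_pos, hθ.2])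
    have h2 : Real.sin θ < 1 := by
      have := sin_lt_sin_of θ (π/2) hθ.1.le le_rfl hθ.2
      simpa using this
    refine ⟨by positivity, ?_⟩
    show t * Real.sin θ ^ 2 < t
    have hsq : Real.sin θ ^ 2 < 1 := by nlinarith
    simpa using mul_lt_mul_of_pos_left hsq ht
  · intro hy
    have hyt : 0 < y / t := div_pos hy.1 ht
    have hyt1 : y / t < 1 := (div_lt_one ht).mpr hy.2
    have hs0 : 0 < Real.sqrt (y / t) := Real.sqrt_pos.mpr hyt
    have hs1 : Real.sqrt (y / t) < 1 := by
      rw [show (1:ℝ) = Real.sqrt 1 by simp]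
      exact Real.sqrt_lt_sqrt hyt.le hyt1
    refine ⟨Real.arcsin (Real.sqrt (y / t)), ⟨Real.arcsin_pos.mpr hs0,
      Real.arcsin_lt_pi_div_two.mpr hs1⟩, ?_⟩
    show t * Real.sin (Real.arcsin (Real.sqrt (y/t))) ^ 2 = y
    rw [Real.sin_arcsin (by linarith) hs1.le, Real.sq_sqrt hyt.le]
    field_simp

lemma phi_inj (t : ℝ) (ht : 0 < t) :
    Set.InjOn (fun θ : ℝ => t * Real.sin θ ^ 2) (Set.Ioo 0 (π/2)) := by
  have hmono : ∀ a ∈ Set.Ioo (0:ℝ) (π/2), ∀ b ∈ Set.Ioo (0:ℝ) (π/2), a < b →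
      t * Real.sin a ^ 2 < t * Real.sin b ^ 2 := by
    intro a ha b hb hab
    have h1 : 0 < Real.sin a := Real.sin_pos_of_pos_of_lt_pi ha.1 (by linarith [Real.pi_pos, ha.2])
    have h2 : Real.sin a < Real.sin b := sin_lt_sin_of a b ha.1.le hb.2.le hab
    have : Real.sin a ^ 2 < Real.sin b ^ 2 := by nlinarith
    exact mul_lt_mul_of_pos_left this ht
  intro a ha b hb hab
  rcases lt_trichotomy a b with h | h | h
  · exact absurd hab (ne_of_lt (hmono a ha b hb h))
  · exact h
  · exact absurd hab.symm (ne_of_lt (hmono b hb a ha h))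

lemma phi_deriv (t : ℝ) (θ : ℝ) :
    HasDerivAt (fun θ : ℝ => t * Real.sin θ ^ 2) (t * (2 * Real.sin θ * Real.cos θ)) θ := by
  have h := ((Real.hasDerivAt_sin θ).pow 2).const_mul t
  simpa using h

lemma G1simp (t : ℝ) (ht : 0 < t) {θ : ℝ} (hθ : θ ∈ Set.Ioo (0:ℝ) (π/2)) :
    |t * (2 * Real.sin θ * Real.cos θ)| •
      (1 / (Real.sqrt (t * Real.sin θ ^ 2) * Real.sqrt (t - t * Real.sin θ ^ 2))) = 2 := by
  have hs : 0 < Real.sin θ := Real.sin_pos_of_pos_of_lt_pi hθ.1 (by linarith [Real.pi_pos, hθ.2])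
  have hc : 0 < Real.cos θ := Real.cos_pos_of_mem_Ioo ⟨by linarith [Real.pi_pos, hθ.1], hθ.2⟩
  have h1 : Real.sqrt (t * Real.sin θ ^ 2) = Real.sqrt t * Real.sin θ := by
    rw [Real.sqrt_mul ht.le, Real.sqrt_sq hs.le]
  have h2 : t - t * Real.sin θ ^ 2 = t * Real.cos θ ^ 2 := by
    have := Real.sin_sq_add_cos_sq θ; nlinarith
  have h3 : Real.sqrt (t * Real.cos θ ^ 2) = Real.sqrt t * Real.cos θ := by
    rw [Real.sqrt_mul ht.le, Real.sqrt_sq hc.le]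
  have hts : Real.sqrt t * Real.sqrt t = t := Real.mul_self_sqrt ht.le
  have htp : 0 < Real.sqrt t := Real.sqrt_pos.mpr ht
  rw [smul_eq_mul, h2, h1, h3, abs_of_nonneg (by positivity), ← hts]
  field_simp
  rw [Real.sqrt_sq htp.le]

lemma G2simp (t : ℝ) (ht : 0 < t) {θ : ℝ} (hθ : θ ∈ Set.Ioo (0:ℝ) (π/2)) :
    |t * (2 * Real.sin θ * Real.cos θ)| •
      (Real.sqrt (t * Real.sin θ ^ 2) / Real.sqrt (t - t * Real.sin θ ^ 2))
      = 2 * t * Real.sin θ ^ 2 := by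
  have hs : 0 < Real.sin θ := Real.sin_pos_of_pos_of_lt_pi hθ.1 (by linarith [Real.pi_pos, hθ.2])
  have hc : 0 < Real.cos θ := Real.cos_pos_of_mem_Ioo ⟨by linarith [Real.pi_pos, hθ.1], hθ.2⟩
  have h1 : Real.sqrt (t * Real.sin θ ^ 2) = Real.sqrt t * Real.sin θ := by
    rw [Real.sqrt_mul ht.le, Real.sqrt_sq hs.le]
  have h2 : t - t * Real.sin θ ^ 2 = t * Real.cos θ ^ 2 := by
    have := Real.sin_sq_add_cos_sq θ; nlinarith
  have h3 : Real.sqrt (t * Real.cos θ ^ 2) = Real.sqrt t * Real.cos θ := by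
    rw [Real.sqrt_mul ht.le, Real.sqrt_sq hc.le]
  have hts : Real.sqrt t * Real.sqrt t = t := Real.mul_self_sqrt ht.le
  have htp : 0 < Real.sqrt t := Real.sqrt_pos.mpr ht
  rw [smul_eq_mul, h2, h1, h3, abs_of_nonneg (by positivity), ← hts]
  field_simp

lemma L1 (t : ℝ) (ht : 0 < t) :
    IntegrableOn (fun s => 1 / (Real.sqrt s * Real.sqrt (t - s))) (Set.Ioo 0 t) ∧
    ∫ s in Set.Ioo (0:ℝ) t, 1 / (Real.sqrt s * Real.sqrt (t - s)) = π := by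
  set G : ℝ → ℝ := fun s => 1 / (Real.sqrt s * Real.sqrt (t - s)) with hG
  have himg := phi_img t ht
  have hiff := integrableOn_image_iff_integrableOn_abs_deriv_smul measurableSet_Ioo
    (fun θ _ => (phi_deriv t θ).hasDerivWithinAt) (phi_inj t ht) G
  have heq := integral_image_eq_integral_abs_deriv_smul measurableSet_Ioo
    (fun θ _ => (phi_deriv t θ).hasDerivWithinAt) (phi_inj t ht) G
  rw [himg] at hiff heq
  have hEq : Set.EqOn (fun θ => |t * (2 * Real.sin θ * Real.cos θ)| • G (t * Real.sin θ ^ 2))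
      (fun _ => (2:ℝ)) (Set.Ioo 0 (π/2)) := fun θ hθ => G1simp t ht hθ
  have hvol : volume (Set.Ioo (0:ℝ) (π/2)) < ⊤ := by
    rw [Real.volume_Ioo]; exact ENNReal.ofReal_lt_top
  constructor
  · rw [hiff]
    exact (integrableOn_const hvol.ne).congr_fun hEq.symm measurableSet_Ioo
  · rw [heq, setIntegral_congr_fun measurableSet_Ioo hEq, setIntegral_const, measureReal_def, Real.volume_Ioo,
      ENNReal.toReal_ofReal (by linarith [Real.pi_pos])]
    rw [smul_eq_mul]; ring

lemma L2 (t : ℝ) (ht : 0 < t) :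
    IntegrableOn (fun s => Real.sqrt s / Real.sqrt (t - s)) (Set.Ioo 0 t) ∧
    ∫ s in Set.Ioo (0:ℝ) t, Real.sqrt s / Real.sqrt (t - s) = π * t / 2 := by
  set G : ℝ → ℝ := fun s => Real.sqrt s / Real.sqrt (t - s) with hG
  have himg := phi_img t ht
  have hiff := integrableOn_image_iff_integrableOn_abs_deriv_smul measurableSet_Ioo
    (fun θ _ => (phi_deriv t θ).hasDerivWithinAt) (phi_inj t ht) G
  have heq := integral_image_eq_integral_abs_deriv_smul measurableSet_Ioo
    (fun θ _ => (phi_deriv t θ).hasDerivWithinAt) (phi_inj t ht) G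
  rw [himg] at hiff heq
  have hEq : Set.EqOn (fun θ => |t * (2 * Real.sin θ * Real.cos θ)| • G (t * Real.sin θ ^ 2))
      (fun θ => 2 * t * Real.sin θ ^ 2) (Set.Ioo 0 (π/2)) := fun θ hθ => G2simp t ht hθ
  have hcont : Continuous (fun θ : ℝ => 2 * t * Real.sin θ ^ 2) := by continuity
  constructor
  · rw [hiff]
    exact ((hcont.integrableOn_Icc (a := 0) (b := π/2)).mono_set
      Set.Ioo_subset_Icc_self).congr_fun hEq.symm measurableSet_Ioo
  · rw [heq, setIntegral_congr_fun measurableSet_Ioo hEq,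
      ← MeasureTheory.integral_Ioc_eq_integral_Ioo,
      ← intervalIntegral.integral_of_le (by positivity : (0:ℝ) ≤ π/2)]
    rw [intervalIntegral.integral_const_mul, integral_sin_sq]
    simp [Real.sin_pi_div_two, Real.cos_pi_div_two]
    ring

lemma term_bound (t c : ℝ) (ht : 0 < t) (f G : ℝ → ℝ)
    (hGint : IntegrableOn G (Set.Ioo 0 t))
    (hb : ∀ s ∈ Set.Ioo (0:ℝ) t, ‖f s‖ ≤ c * G s) :
    |∫ s in (0:ℝ)..t, f s| ≤ c * ∫ s in Set.Ioo (0:ℝ) t, G s := by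
  have h0 : |∫ s in (0:ℝ)..t, f s| ≤ |∫ s in (0:ℝ)..t, ‖f s‖| := by
    simpa using intervalIntegral.norm_integral_le_abs_integral_norm (f := f) (a := 0) (b := t)
      (μ := volume)
  have h1 : |∫ s in (0:ℝ)..t, ‖f s‖| = ∫ s in (0:ℝ)..t, ‖f s‖ :=
    abs_of_nonneg (intervalIntegral.integral_nonneg ht.le (fun u _ => norm_nonneg _))
  have h2 : (∫ s in (0:ℝ)..t, ‖f s‖) = ∫ s in Set.Ioo (0:ℝ) t, ‖f s‖ := by
    rw [intervalIntegral.integral_of_le ht.le, MeasureTheory.integral_Ioc_eq_integral_Ioo]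
  have h3 : (∫ s in Set.Ioo (0:ℝ) t, ‖f s‖) ≤ ∫ s in Set.Ioo (0:ℝ) t, c * G s := by
    apply MeasureTheory.integral_mono_of_nonneg
    · exact Filter.Eventually.of_forall (fun s => norm_nonneg _)
    · exact hGint.const_mul c
    · exact (ae_restrict_iff' measurableSet_Ioo).mpr (Filter.Eventually.of_forall hb)
  rw [MeasureTheory.integral_const_mul] at h3
  linarith [h0, h1.ge, h2.le]

lemma inner_le_L (a : ℝ) (ha : 0 ≤ a) :
    (∫ z in (0:ℝ)..a, Real.exp (-z ^ 2)) ≤ a := by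
  have h1 : (∫ z in (0:ℝ)..a, Real.exp (-z ^ 2)) ≤ ∫ z in (0:ℝ)..a, (1:ℝ) := by
    apply intervalIntegral.integral_mono_on ha
    · exact (Real.continuous_exp.comp (by continuity)).intervalIntegrable _ _
    · exact intervalIntegrable_const
    · intro u _
      rw [← Real.exp_zero]
      exact Real.exp_le_exp.mpr (neg_nonpos.mpr (sq_nonneg u))
  simpa using h1

theorem stmt_11 (T : ℝ) (hT : 0 < T) (g : ℝ → ℝ)
    (hg : ContinuousOn g (Set.Ioo 0 T)) (M : ℝ)
    (hM : ∀ τ ∈ Set.Ioo (0:ℝ) T, |Real.sqrt τ * g τ| ≤ M) (ε : ℝ) (hε : 0 < ε) :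
    ∀ r t : ℝ, 1 ≤ r → t ∈ Set.Ioo (0:ℝ) T →
      |(2 / (r * Real.sqrt π)) *
          (∫ s in (0:ℝ)..t, g s *
            ∫ z in (0:ℝ)..((r - 1) * Real.sqrt ε / (2 * Real.sqrt (t - s))), Real.exp (-z ^ 2))
        - (2 / (r * Real.sqrt π)) *
          (∫ s in (0:ℝ)..t, (∫ σ in (0:ℝ)..s, Real.exp (σ - s) * g σ) *
            ∫ z in (0:ℝ)..((r - 1) * Real.sqrt ε / (2 * Real.sqrt (t - s))), Real.exp (-z ^ 2))|
        ≤ Real.sqrt (ε * π) * (1 + t) * M := by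
  intro r t hr ht
  obtain ⟨ht0, htT⟩ := ht
  have hM0 : 0 ≤ M := le_trans (abs_nonneg _) (hM (t/2) ⟨by linarith, by linarith⟩)
  have hr0 : 0 < r := lt_of_lt_of_le one_pos hr
  have hπ : 0 < Real.sqrt π := Real.sqrt_pos.mpr Real.pi_pos
  have hε' : 0 ≤ Real.sqrt ε := Real.sqrt_nonneg ε
  set L : ℝ → ℝ := fun s => (r - 1) * Real.sqrt ε / (2 * Real.sqrt (t - s)) with hLdef
  have hLnn : ∀ s : ℝ, 0 ≤ L s :=
    fun s => div_nonneg (mul_nonneg (by linarith) hε') (by positivity)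
  have hinn : ∀ s : ℝ, 0 ≤ ∫ z in (0:ℝ)..(L s), Real.exp (-z ^ 2) :=
    fun s => intervalIntegral.integral_nonneg (hLnn s) (fun u _ => (Real.exp_pos _).le)
  have hile : ∀ s : ℝ, (∫ z in (0:ℝ)..(L s), Real.exp (-z ^ 2)) ≤ L s :=
    fun s => inner_le_L (L s) (hLnn s)
  -- bound on g
  have hgb : ∀ s ∈ Set.Ioo (0:ℝ) T, |g s| ≤ M / Real.sqrt s := by
    intro s hs
    have hsq : 0 < Real.sqrt s := Real.sqrt_pos.mpr hs.1
    rw [le_div_iff₀ hsq]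
    calc |g s| * Real.sqrt s = |Real.sqrt s * g s| := by
          rw [abs_mul, abs_of_nonneg (Real.sqrt_nonneg s)]; ring
      _ ≤ M := hM s hs
  -- bound on the retarded integral
  have hhb : ∀ s ∈ Set.Ioo (0:ℝ) t, |∫ σ in (0:ℝ)..s, Real.exp (σ - s) * g σ| ≤
      2 * M * Real.sqrt s := by
    intro s hs
    have hint : IntegrableOn (fun σ : ℝ => σ ^ (-(1/2) : ℝ)) (Set.Ioo 0 s) :=
      (intervalIntegrable_iff_integrableOn_Ioo_of_le hs.1.le).mp
        (intervalIntegral.intervalIntegrable_rpow' (by norm_num))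
    have hb : ∀ σ ∈ Set.Ioo (0:ℝ) s, ‖Real.exp (σ - s) * g σ‖ ≤ M * σ ^ (-(1/2) : ℝ) := by
      intro σ hσ
      have hσT : σ ∈ Set.Ioo (0:ℝ) T := ⟨hσ.1, by linarith [hσ.2, hs.2]⟩
      have hgσ : |g σ| ≤ M / Real.sqrt σ := hgb σ hσT
      have hexp : Real.exp (σ - s) ≤ 1 := by
        rw [← Real.exp_zero]; exact Real.exp_le_exp.mpr (by linarith [hσ.2])
      have hrw : M * σ ^ (-(1/2) : ℝ) = M / Real.sqrt σ := by
        rw [Real.rpow_neg hσ.1.le, ← Real.sqrt_eq_rpow, div_eq_mul_inv]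
      rw [norm_mul, Real.norm_eq_abs, Real.norm_eq_abs, abs_of_pos (Real.exp_pos _), hrw]
      calc Real.exp (σ - s) * |g σ| ≤ 1 * (M / Real.sqrt σ) :=
            mul_le_mul hexp hgσ (abs_nonneg _) (by norm_num)
        _ = M / Real.sqrt σ := one_mul _
    have := term_bound s M hs.1 _ _ hint hb
    have hval : (∫ σ in Set.Ioo (0:ℝ) s, σ ^ (-(1/2) : ℝ)) = 2 * Real.sqrt s := by
      rw [← MeasureTheory.integral_Ioc_eq_integral_Ioo,
        ← intervalIntegral.integral_of_le hs.1.le,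
        integral_rpow (Or.inl (by norm_num))]
      rw [Real.zero_rpow (by norm_num), Real.sqrt_eq_rpow]
      norm_num
      ring
    rw [hval] at this
    calc |∫ σ in (0:ℝ)..s, Real.exp (σ - s) * g σ| ≤ M * (2 * Real.sqrt s) := this
      _ = 2 * M * Real.sqrt s := by ring
  -- first term
  have hA : |∫ s in (0:ℝ)..t, g s * ∫ z in (0:ℝ)..(L s), Real.exp (-z ^ 2)| ≤
      (M * (r - 1) * Real.sqrt ε / 2) * π := by
    have hb : ∀ s ∈ Set.Ioo (0:ℝ) t,
        ‖g s * ∫ z in (0:ℝ)..(L s), Real.exp (-z ^ 2)‖ ≤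
          (M * (r - 1) * Real.sqrt ε / 2) * (1 / (Real.sqrt s * Real.sqrt (t - s))) := by
      intro s hs
      have h1 : |g s| ≤ M / Real.sqrt s := hgb s ⟨hs.1, hs.2.trans htT⟩
      calc ‖g s * ∫ z in (0:ℝ)..(L s), Real.exp (-z ^ 2)‖
          = |g s| * (∫ z in (0:ℝ)..(L s), Real.exp (-z ^ 2)) := by
            rw [norm_mul, Real.norm_eq_abs, Real.norm_eq_abs, abs_of_nonneg (hinn s)]
        _ ≤ (M / Real.sqrt s) * L s :=
            mul_le_mul h1 (hile s) (hinn s) (div_nonneg hM0 (Real.sqrt_nonneg s))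
        _ = (M * (r - 1) * Real.sqrt ε / 2) * (1 / (Real.sqrt s * Real.sqrt (t - s))) := by
            rw [hLdef]; ring
    have := term_bound t (M * (r - 1) * Real.sqrt ε / 2) ht0 _ _ (L1 t ht0).1 hb
    rwa [(L1 t ht0).2] at this
  -- second term
  have hB : |∫ s in (0:ℝ)..t, (∫ σ in (0:ℝ)..s, Real.exp (σ - s) * g σ) *
      ∫ z in (0:ℝ)..(L s), Real.exp (-z ^ 2)| ≤
      (M * (r - 1) * Real.sqrt ε) * (π * t / 2) := by
    have hb : ∀ s ∈ Set.Ioo (0:ℝ) t,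
        ‖(∫ σ in (0:ℝ)..s, Real.exp (σ - s) * g σ) * ∫ z in (0:ℝ)..(L s), Real.exp (-z ^ 2)‖ ≤
          (M * (r - 1) * Real.sqrt ε) * (Real.sqrt s / Real.sqrt (t - s)) := by
      intro s hs
      calc ‖(∫ σ in (0:ℝ)..s, Real.exp (σ - s) * g σ) * ∫ z in (0:ℝ)..(L s), Real.exp (-z ^ 2)‖
          = |∫ σ in (0:ℝ)..s, Real.exp (σ - s) * g σ| *
              (∫ z in (0:ℝ)..(L s), Real.exp (-z ^ 2)) := by
            rw [norm_mul, Real.norm_eq_abs, Real.norm_eq_abs, abs_of_nonneg (hinn s)]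
        _ ≤ (2 * M * Real.sqrt s) * L s :=
            mul_le_mul (hhb s hs) (hile s) (hinn s) (by positivity)
        _ = (M * (r - 1) * Real.sqrt ε) * (Real.sqrt s / Real.sqrt (t - s)) := by
            rw [hLdef]; ring
    have := term_bound t (M * (r - 1) * Real.sqrt ε) ht0 _ _ (L2 t ht0).1 hb
    rwa [(L2 t ht0).2] at this
  -- assemble
  set A := ∫ s in (0:ℝ)..t, g s * ∫ z in (0:ℝ)..(L s), Real.exp (-z ^ 2) with hAdef
  set B := ∫ s in (0:ℝ)..t, (∫ σ in (0:ℝ)..s, Real.exp (σ - s) * g σ) *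
    ∫ z in (0:ℝ)..(L s), Real.exp (-z ^ 2) with hBdef
  have hc : 0 < 2 / (r * Real.sqrt π) := by positivity
  have htri : |2 / (r * Real.sqrt π) * A - 2 / (r * Real.sqrt π) * B| ≤
      2 / (r * Real.sqrt π) * |A| + 2 / (r * Real.sqrt π) * |B| := by
    calc |2 / (r * Real.sqrt π) * A - 2 / (r * Real.sqrt π) * B|
        ≤ |2 / (r * Real.sqrt π) * A| + |2 / (r * Real.sqrt π) * B| := abs_sub _ _
      _ = 2 / (r * Real.sqrt π) * |A| + 2 / (r * Real.sqrt π) * |B| := by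
          rw [abs_mul, abs_mul, abs_of_pos hc]
  have hππ : Real.sqrt π * Real.sqrt π = π := Real.mul_self_sqrt Real.pi_pos.le
  have hq : (0:ℝ) ≤ M * Real.sqrt ε * Real.sqrt π := by positivity
  have hfinal : 2 / (r * Real.sqrt π) * ((M * (r - 1) * Real.sqrt ε / 2) * π)
      + 2 / (r * Real.sqrt π) * ((M * (r - 1) * Real.sqrt ε) * (π * t / 2))
      ≤ Real.sqrt (ε * π) * (1 + t) * M := by
    have hlhs : 2 / (r * Real.sqrt π) * ((M * (r - 1) * Real.sqrt ε / 2) * π)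
        + 2 / (r * Real.sqrt π) * ((M * (r - 1) * Real.sqrt ε) * (π * t / 2))
        = (M * Real.sqrt ε * Real.sqrt π * (1 + t)) * ((r - 1) / r) := by
      rw [← hππ]
      field_simp
      rw [Real.sqrt_sq hπ.le]
    rw [hlhs, Real.sqrt_mul hε.le]
    have h1 : (r - 1) / r ≤ 1 := by
      rw [div_le_one hr0]; linarith
    have h2 : 0 ≤ (r - 1) / r := div_nonneg (by linarith) hr0.le
    calc (M * Real.sqrt ε * Real.sqrt π * (1 + t)) * ((r - 1) / r)
        ≤ (M * Real.sqrt ε * Real.sqrt π * (1 + t)) * 1 := by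
          apply mul_le_mul_of_nonneg_left h1 (by positivity)
      _ = Real.sqrt ε * Real.sqrt π * (1 + t) * M := by ring
  calc |2 / (r * Real.sqrt π) * A - 2 / (r * Real.sqrt π) * B|
      ≤ 2 / (r * Real.sqrt π) * |A| + 2 / (r * Real.sqrt π) * |B| := htri
    _ ≤ 2 / (r * Real.sqrt π) * ((M * (r - 1) * Real.sqrt ε / 2) * π)
        + 2 / (r * Real.sqrt π) * ((M * (r - 1) * Real.sqrt ε) * (π * t / 2)) := by
        apply add_le_add <;> exact mul_le_mul_of_nonneg_left (by assumption) hc.le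
    _ ≤ Real.sqrt (ε * π) * (1 + t) * M := hfinal
end
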